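/- arXiv:2104.12286 — 2 statements merged into one kernel-verified Lean document; each statement's English description precedes it below -/
import Mathlib

section
/- Every bipartite graph whose edges can be partitioned into d forests is (d+1)-choosable (i.e., (d+1)-list-colorable). -/
open unitInterval

namespace OnePlanarPaper

abbrev Plane : Type := ℝ × ℝ

/-- A (good) drawing of a simple graph in the plane: vertices are distinct points,
each edge is an injective arc between the images of its endpoints, arcs do not pass
through other vertices, and the two orientations of an edge trace the same arc. -/
structure Drawing {V : Type*} (G : SimpleGraph V) where
  vtx : V → Plane
  arc : ∀ ⦃u v : V⦄, G.Adj u v → Path (vtx u) (vtx v)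
  vtx_inj : Function.Injective vtx
  arc_inj : ∀ ⦃u v : V⦄ (h : G.Adj u v), Function.Injective ⇑(arc h)
  arc_symm : ∀ ⦃u v : V⦄ (h : G.Adj u v), Set.range ⇑(arc h) = Set.range ⇑(arc h.symm)
  arc_avoid : ∀ ⦃u v : V⦄ (h : G.Adj u v) (w : V),
      vtx w ∈ Set.range ⇑(arc h) → w = u ∨ w = v

namespace Drawing

variable {V : Type*} {G : SimpleGraph V} (D : Drawing G)

/-- The interior points of the arc of an edge (endpoints excluded). -/
def interiorPts {u v : V} (h : G.Adj u v) : Set Plane :=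
  {p | ∃ t : I, t ≠ 0 ∧ t ≠ 1 ∧ D.arc h t = p}

/-- Two edges cross if their interiors meet. -/
def Crosses {u v x y : V} (h₁ : G.Adj u v) (h₂ : G.Adj x y) : Prop :=
  (D.interiorPts h₁ ∩ D.interiorPts h₂).Nonempty

/-- A planar drawing: no two distinct edges cross. -/
def IsPlanar : Prop :=
  ∀ ⦃u v x y : V⦄ (h₁ : G.Adj u v) (h₂ : G.Adj x y),
    s(u, v) ≠ s(x, y) → ¬ D.Crosses h₁ h₂

/-- A 1-planar drawing: every edge is crossed by at most one other edge. -/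
def IsOnePlanar : Prop :=
  ∀ ⦃u v : V⦄ (h₁ : G.Adj u v),
    {ed : Sym2 V | ed ≠ s(u, v) ∧
      ∃ (x y : V) (h₂ : G.Adj x y), s(x, y) = ed ∧ D.Crosses h₁ h₂}.Subsingleton

/-- The set of points covered by the drawing. -/
def image : Set Plane :=
  Set.range D.vtx ∪ {p | ∃ (u v : V) (h : G.Adj u v), p ∈ Set.range ⇑(D.arc h)}

/-- An edge (as an unordered pair) is crossed in the drawing. -/
def Crossed (ed : Sym2 V) : Prop :=
  ∃ (u v x y : V) (h₁ : G.Adj u v) (h₂ : G.Adj x y),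
    s(u, v) = ed ∧ s(x, y) ≠ ed ∧ D.Crosses h₁ h₂

/-- Planar-maximal: no crossing-free edge can be added between non-adjacent vertices. -/
def PlanarMaximal : Prop :=
  ∀ u v : V, u ≠ v → ¬ G.Adj u v →
    ∀ p : Path (D.vtx u) (D.vtx v), Function.Injective ⇑p →
      ∃ t : I, t ≠ 0 ∧ t ≠ 1 ∧ p t ∈ D.image

end Drawing

/-- A graph is planar if it has a crossing-free drawing. -/
def Planar {V : Type*} (G : SimpleGraph V) : Prop :=
  ∃ D : Drawing G, D.IsPlanar

/-- A graph is 1-planar if it has a drawing where every edge is crossed at most once. -/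
def OnePlanar {V : Type*} (G : SimpleGraph V) : Prop :=
  ∃ D : Drawing G, D.IsOnePlanar

/-- A PGF-partition: the edge set splits into a planar part and a forest part. -/
def PGFPartition {V : Type*} (G : SimpleGraph V) : Prop :=
  ∃ A B : Set (Sym2 V), A ∪ B = G.edgeSet ∧ Disjoint A B ∧
    Planar (SimpleGraph.fromEdgeSet A) ∧ (SimpleGraph.fromEdgeSet B).IsAcyclic

/-- The edge set partitions into `d` forests. -/
def ForestPartition {V : Type*} (G : SimpleGraph V) (d : ℕ) : Prop :=
  ∃ F : Fin d → Set (Sym2 V),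
    (⋃ i, F i) = G.edgeSet ∧
    Pairwise (Function.onFun Disjoint F) ∧
    ∀ i, (SimpleGraph.fromEdgeSet (F i)).IsAcyclic

/-- `k`-choosability (list colorability with lists of size `k`). -/
def Choosable {V : Type*} (G : SimpleGraph V) (k : ℕ) : Prop :=
  ∀ L : V → Finset ℕ, (∀ v, (L v).card = k) →
    ∃ c : V → ℕ, (∀ v, c v ∈ L v) ∧ ∀ ⦃u v : V⦄, G.Adj u v → c u ≠ c v

/-- A loopless multigraph drawn in the plane without crossings: distinct edges
meet only at common endpoints. -/
structure PlaneMultigraph (V E : Type*) where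
  vtx : V → Plane
  ends : E → V × V
  no_loops : ∀ e, (ends e).1 ≠ (ends e).2
  arc : (e : E) → Path (vtx (ends e).1) (vtx (ends e).2)
  vtx_inj : Function.Injective vtx
  arc_inj : ∀ e, Function.Injective ⇑(arc e)
  arc_avoid : ∀ e w, vtx w ∈ Set.range ⇑(arc e) → w = (ends e).1 ∨ w = (ends e).2
  planar : ∀ e e', e ≠ e' →
      ∀ p ∈ Set.range ⇑(arc e), p ∈ Set.range ⇑(arc e') → ∃ w, p = vtx w

namespace PlaneMultigraph

variable {V E : Type*} (G : PlaneMultigraph V E)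

/-- The set of points covered by the drawing. -/
def image : Set Plane := Set.range G.vtx ∪ ⋃ e, Set.range ⇑(G.arc e)

/-- A face: a connected component of the complement of the drawing. -/
def IsFace (f : Set Plane) : Prop :=
  ∃ p ∉ G.image, f = connectedComponentIn G.imageᶜ p

/-- A face contains a vertex if the vertex point is on its boundary (closure). -/
def Contains (f : Set Plane) (v : V) : Prop := G.vtx v ∈ closure f

/-- The unordered pair of endpoints of an edge. -/
def edgeSym (e : E) : Sym2 V := s((G.ends e).1, (G.ends e).2)

/-- Adjacency in the multigraph. -/
def Adj (a b : V) : Prop := ∃ e, G.edgeSym e = s(a, b)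

/-- `f` is a face of degree `k` with facial cycle `z` and boundary edges `e`:
consecutive boundary edges `e i` join `z i` to `z (i+1)` (cyclically), the `e i`
are distinct, and they make up exactly the boundary of `f`. -/
def IsFacialCycle (k : ℕ) (f : Set Plane) (z : ZMod k → V) (e : ZMod k → E) : Prop :=
  G.IsFace f ∧ Function.Injective e ∧
  (∀ i : ZMod k, G.edgeSym (e i) = s(z i, z (i + 1))) ∧
  frontier f = ⋃ i, Set.range ⇑(G.arc (e i))

/-- A quadrangle: a face of degree 4 with facial cycle `⟨z 0, z 1, z 2, z 3⟩`. -/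
def IsQuadrangle (f : Set Plane) (z : ZMod 4 → V) (e : ZMod 4 → E) : Prop :=
  G.IsFacialCycle 4 f z e

end PlaneMultigraph

/-- `H` is the planar skeleton of the drawing `D` of `G`: same vertex placement,
and its edges are exactly the uncrossed edges of `G` with the same arcs. -/
def IsSkeleton {V E : Type*} {G : SimpleGraph V} (D : Drawing G)
    (H : PlaneMultigraph V E) : Prop :=
  H.vtx = D.vtx ∧
  Function.Injective H.edgeSym ∧
  (∀ e : E, H.edgeSym e ∈ G.edgeSet ∧ ¬ D.Crossed (H.edgeSym e)) ∧
  (∀ ed ∈ G.edgeSet, ¬ D.Crossed ed → ∃ e : E, H.edgeSym e = ed) ∧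
  (∀ (e : E) (u v : V) (h : G.Adj u v), H.edgeSym e = s(u, v) →
      Set.range ⇑(H.arc e) = Set.range ⇑(D.arc h))


open SimpleGraph in
private lemma kernel_exists {V : Type*} (Arc : V → V → Prop) (C : V → Fin 2)
    (hC : ∀ u v, Arc u v → C u ≠ C v) (S : Finset V) :
    ∃ K : Finset V, K ⊆ S ∧ (∀ u ∈ K, ∀ v ∈ K, ¬ Arc u v) ∧
      ∀ v ∈ S, v ∉ K → ∃ w ∈ K, Arc v w := by
  classical
  set f : Set V →o Set V :=
    ⟨fun X => {a | a ∈ S ∧ C a = 0 ∧ ∀ b ∈ S, Arc a b → ∃ a' ∈ S, a' ∈ X ∧ Arc b a'},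
     by
      intro X Y hXY a ha
      exact ⟨ha.1, ha.2.1, fun b hb hab => by
        obtain ⟨a', h1, h2, h3⟩ := ha.2.2 b hb hab
        exact ⟨a', h1, hXY h2, h3⟩⟩⟩ with hf
  set X := f.lfp with hX
  have hfix : f X = X := f.map_lfp
  have hXmem : ∀ a, a ∈ X ↔ (a ∈ S ∧ C a = 0 ∧
      ∀ b ∈ S, Arc a b → ∃ a' ∈ S, a' ∈ X ∧ Arc b a') := by
    intro a
    conv_lhs => rw [← hfix]
    rfl
  set B : Set V := {b | b ∈ S ∧ C b = 1 ∧ ¬ ∃ a' ∈ S, a' ∈ X ∧ Arc b a'} with hB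
  have htwo : ∀ x : Fin 2, x = 0 ∨ x = 1 := by decide
  refine ⟨S.filter (fun v => v ∈ X ∨ v ∈ B), Finset.filter_subset _ _, ?_, ?_⟩
  · intro u hu v hv harc
    obtain ⟨huS, hu'⟩ := Finset.mem_filter.mp hu
    obtain ⟨hvS, hv'⟩ := Finset.mem_filter.mp hv
    rcases hu' with huX | huB
    · rcases hv' with hvX | hvB
      · exact hC u v harc (((hXmem u).mp huX).2.1.trans (((hXmem v).mp hvX).2.1).symm)
      · obtain ⟨a', h1, h2, h3⟩ := ((hXmem u).mp huX).2.2 v hvS harc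
        exact hvB.2.2 ⟨a', h1, h2, h3⟩
    · rcases hv' with hvX | hvB
      · exact huB.2.2 ⟨v, hvS, hvX, harc⟩
      · exact hC u v harc (huB.2.1.trans hvB.2.1.symm)
  · intro v hvS hvK
    have hnot : ¬ (v ∈ X ∨ v ∈ B) := fun hc => hvK (Finset.mem_filter.mpr ⟨hvS, hc⟩)
    push_neg at hnot
    obtain ⟨hvX, hvB⟩ := hnot
    rcases htwo (C v) with h0 | h1
    · rw [hXmem] at hvX
      push_neg at hvX
      obtain ⟨b, hbS, harc, hnb⟩ := hvX hvS h0
      have hCb : C b = 1 := by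
        rcases htwo (C b) with hb | hb
        · exact absurd (h0.trans hb.symm) (hC v b harc)
        · exact hb
      exact ⟨b, Finset.mem_filter.mpr ⟨hbS, Or.inr ⟨hbS, hCb, by push_neg; exact hnb⟩⟩, harc⟩
    · have : ¬ ¬ ∃ a' ∈ S, a' ∈ X ∧ Arc v a' := fun hc => hvB ⟨hvS, h1, hc⟩
      push_neg at this
      obtain ⟨a', h1', h2', h3'⟩ := this
      exact ⟨a', Finset.mem_filter.mpr ⟨h1', Or.inl h2'⟩, h3'⟩

open SimpleGraph in
open Classical in
private lemma list_color {V : Type*} (Arc : V → V → Prop) (C : V → Fin 2)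
    (hC : ∀ u v, Arc u v → C u ≠ C v) :
    ∀ U : Finset V, ∀ L : V → Finset ℕ,
      (∀ v ∈ U, (U.filter (fun w => Arc v w)).card < (L v).card) →
      ∃ c : V → ℕ, (∀ v ∈ U, c v ∈ L v) ∧
        ∀ u ∈ U, ∀ v ∈ U, (Arc u v ∨ Arc v u) → c u ≠ c v := by
  classical
  intro U
  induction U using Finset.strongInduction with
  | _ U ih =>
    intro L hL
    rcases U.eq_empty_or_nonempty with rfl | ⟨v₀, hv₀⟩
    · exact ⟨fun _ => 0, by simp, by simp⟩
    have hLv₀ : (L v₀).Nonempty :=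
      Finset.card_pos.mp (lt_of_le_of_lt (Nat.zero_le _) (hL v₀ hv₀))
    obtain ⟨α, hα⟩ := hLv₀
    set S : Finset V := U.filter (fun v => α ∈ L v) with hS
    obtain ⟨K, hKS, hKind, hKabs⟩ := kernel_exists Arc C hC S
    have hv₀S : v₀ ∈ S := Finset.mem_filter.mpr ⟨hv₀, hα⟩
    have hKne : K.Nonempty := by
      by_cases hk : v₀ ∈ K
      · exact ⟨v₀, hk⟩
      · obtain ⟨w, hw, _⟩ := hKabs v₀ hv₀S hk
        exact ⟨w, hw⟩
    have hKU : K ⊆ U := hKS.trans (Finset.filter_subset _ _)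
    have hsub : U \ K ⊂ U := Finset.sdiff_ssubset hKU hKne
    have hinv : ∀ v ∈ U \ K,
        ((U \ K).filter (fun w => Arc v w)).card < ((L v).erase α).card := by
      intro v hv
      have hvU : v ∈ U := (Finset.mem_sdiff.mp hv).1
      have hvK : v ∉ K := (Finset.mem_sdiff.mp hv).2
      by_cases hvS : v ∈ S
      · obtain ⟨w, hwK, hvw⟩ := hKabs v hvS hvK
        have h1 : (U \ K).filter (fun w => Arc v w) ⊆
            (U.filter (fun w => Arc v w)).erase w := by
          intro x hx
          have hx' := Finset.mem_filter.mp hx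
          rw [Finset.mem_erase]
          refine ⟨?_, Finset.mem_filter.mpr ⟨(Finset.mem_sdiff.mp hx'.1).1, hx'.2⟩⟩
          rintro rfl
          exact (Finset.mem_sdiff.mp hx'.1).2 hwK
        have h2 : w ∈ U.filter (fun w => Arc v w) :=
          Finset.mem_filter.mpr ⟨hKU hwK, hvw⟩
        have h3 := Finset.card_le_card h1
        have h4 := Finset.card_erase_of_mem h2
        have h5 := hL v hvU
        have h6 : α ∈ L v := (Finset.mem_filter.mp hvS).2
        have h7 := Finset.card_erase_of_mem h6
        have h8 : 0 < (U.filter (fun w => Arc v w)).card := Finset.card_pos.mpr ⟨w, h2⟩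
        omega
      · have h6 : α ∉ L v := fun hc => hvS (Finset.mem_filter.mpr ⟨hvU, hc⟩)
        rw [Finset.erase_eq_of_notMem h6]
        exact lt_of_le_of_lt
          (Finset.card_le_card (Finset.filter_subset_filter _ Finset.sdiff_subset))
          (hL v hvU)
    obtain ⟨c', hc'1, hc'2⟩ := ih (U \ K) hsub (fun v => (L v).erase α) hinv
    refine ⟨fun v => if v ∈ K then α else c' v, ?_, ?_⟩
    · intro v hv
      by_cases hvK : v ∈ K
      · simpa [hvK] using (Finset.mem_filter.mp (hKS hvK)).2
      · simp only [hvK, if_false]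
        exact Finset.erase_subset _ _ (hc'1 v (Finset.mem_sdiff.mpr ⟨hv, hvK⟩))
    · intro u hu v hv harc
      by_cases huK : u ∈ K <;> by_cases hvK : v ∈ K
      · rcases harc with h | h
        · exact absurd h (hKind u huK v hvK)
        · exact absurd h (hKind v hvK u huK)
      · simp only [huK, hvK, if_true, if_false]
        intro he
        have := hc'1 v (Finset.mem_sdiff.mpr ⟨hv, hvK⟩)
        rw [← he] at this
        exact Finset.notMem_erase α (L v) this
      · simp only [huK, hvK, if_true, if_false]
        intro he
        have := hc'1 u (Finset.mem_sdiff.mpr ⟨hu, huK⟩)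
        rw [he] at this
        exact Finset.notMem_erase α (L u) this
      · simp only [huK, hvK, if_false]
        exact hc'2 u (Finset.mem_sdiff.mpr ⟨hu, huK⟩) v (Finset.mem_sdiff.mpr ⟨hv, hvK⟩) harc

open SimpleGraph in
private lemma forest_parent {V : Type*} {G : SimpleGraph V} (hac : G.IsAcyclic) :
    ∃ par : V → V, ∀ u v, G.Adj u v → par u = v ∨ par v = u := by
  classical
  have huniq : ∀ ⦃v w : V⦄ (p q : G.Walk v w), p.IsPath → q.IsPath → p = q := by
    intro v w p q hp hq
    exact congrArg Subtype.val ((isAcyclic_iff_path_unique.mp hac) ⟨p, hp⟩ ⟨q, hq⟩)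
  set rep : V → V := fun v => (G.connectedComponentMk v).out with hrep
  have hreach : ∀ v, G.Reachable v (rep v) := by
    intro v
    have h1 : G.connectedComponentMk (rep v) = G.connectedComponentMk v :=
      Quot.out_eq _
    exact (SimpleGraph.ConnectedComponent.eq.mp h1).symm
  have hrepeq : ∀ u v, G.Adj u v → rep u = rep v := by
    intro u v h
    exact congrArg Quot.out (SimpleGraph.ConnectedComponent.eq.mpr h.reachable)
  set pth : ∀ v, G.Walk v (rep v) := fun v => ((hreach v).some.toPath : G.Path _ _).1
    with hpth
  have hpathp : ∀ v, (pth v).IsPath := fun v => ((hreach v).some.toPath).2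
  refine ⟨fun v => (pth v).getVert 1, ?_⟩
  intro u v h
  have hne : u ≠ v := h.ne
  have hrr : rep u = rep v := hrepeq u v h
  by_cases hu : u = rep u
  · -- v ≠ rep v, show par v = u
    right
    have hv : v ≠ rep v := by
      intro hv
      exact hne (hu.trans (hrr.trans hv.symm))
    have e : u = rep v := hu.trans hrr
    have hsingle : ((Walk.cons h.symm Walk.nil : G.Walk v u).copy rfl e).IsPath := by
      rw [Walk.isPath_copy]
      exact (Path.singleton h.symm).2
    have heq := huniq (pth v) _ (hpathp v) hsingle
    show (pth v).getVert 1 = u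
    rw [heq, Walk.getVert_copy]
    rfl
  · by_cases hv : v = rep v
    · -- u ≠ rep u, show par u = v
      left
      have e : v = rep u := hv.trans hrr.symm
      have hsingle : ((Walk.cons h Walk.nil : G.Walk u v).copy rfl e).IsPath := by
        rw [Walk.isPath_copy]
        exact (Path.singleton h).2
      have heq := huniq (pth u) _ (hpathp u) hsingle
      show (pth u).getVert 1 = v
      rw [heq, Walk.getVert_copy]
      rfl
    · -- both non-roots
      by_cases hmem : u ∈ (pth v).support
      · right
        have ht : ((pth v).takeUntil u hmem).IsPath := (hpathp v).takeUntil hmem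
        have hts : (pth v).takeUntil u hmem = Walk.cons h.symm Walk.nil :=
          huniq _ _ ht (Path.singleton h.symm).2
        have hspec := (pth v).take_spec hmem
        rw [hts, Walk.cons_append, Walk.nil_append] at hspec
        show (pth v).getVert 1 = u
        rw [← hspec]
        rw [Walk.getVert_cons_succ]
        exact (Walk.getVert_zero _)
      · left
        have e : rep v = rep u := hrr.symm
        have hcons : ((Walk.cons h (pth v)).copy rfl e).IsPath := by
          rw [Walk.isPath_copy]
          exact (hpathp v).cons hmem
        have heq := huniq (pth u) _ (hpathp u) hcons
        show (pth u).getVert 1 = v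
        rw [heq, Walk.getVert_copy, Walk.getVert_cons_succ]
        exact (Walk.getVert_zero _)

/-- Every bipartite graph whose edges partition into `d` forests is `(d+1)`-choosable. -/
theorem bipartite_forests_choosable {V : Type*} [Fintype V] (G : SimpleGraph V)
    (hbip : G.Colorable 2) (d : ℕ) (h : ForestPartition G d) :
    Choosable G (d + 1) := by
  classical
  obtain ⟨F, hFU, _hFdisj, hFac⟩ := h
  obtain ⟨C⟩ := hbip
  choose par hpar using fun i : Fin d => forest_parent (hFac i)
  set Arc : V → V → Prop :=
    fun u v => ∃ i, (SimpleGraph.fromEdgeSet (F i)).Adj u v ∧ par i u = v with hArc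
  have hArcAdj : ∀ u v, Arc u v → G.Adj u v := by
    rintro u v ⟨i, hadj, -⟩
    rw [SimpleGraph.fromEdgeSet_adj] at hadj
    have hm : s(u, v) ∈ G.edgeSet := by
      rw [← hFU]
      exact Set.mem_iUnion.mpr ⟨i, hadj.1⟩
    exact hm
  have hcov : ∀ u v, G.Adj u v → Arc u v ∨ Arc v u := by
    intro u v huv
    have hm : s(u, v) ∈ ⋃ i, F i := by
      rw [hFU]
      exact huv
    obtain ⟨i, hi⟩ := Set.mem_iUnion.mp hm
    have hadj : (SimpleGraph.fromEdgeSet (F i)).Adj u v :=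
      (SimpleGraph.fromEdgeSet_adj (F i)).mpr ⟨hi, huv.ne⟩
    rcases hpar i u v hadj with hp | hp
    · exact Or.inl ⟨i, hadj, hp⟩
    · exact Or.inr ⟨i, hadj.symm, hp⟩
  have hC : ∀ u v, Arc u v → C u ≠ C v := fun u v hv => C.valid (hArcAdj u v hv)
  intro L hL
  have hdeg : ∀ v ∈ (Finset.univ : Finset V),
      ((Finset.univ : Finset V).filter (fun w => Arc v w)).card < (L v).card := by
    intro v _
    rw [hL v]
    have hle : ((Finset.univ : Finset V).filter (fun w => Arc v w)).card ≤ d := by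
      rcases ((Finset.univ : Finset V).filter (fun w => Arc v w)).eq_empty_or_nonempty
        with he | ⟨w₀, hw₀⟩
      · simp [he]
      · obtain ⟨i₀, -⟩ := (Finset.mem_filter.mp hw₀).2
        have : ((Finset.univ : Finset V).filter (fun w => Arc v w)).card ≤
            (Finset.univ : Finset (Fin d)).card := by
          apply Finset.card_le_card_of_injOn
            (fun w => if hw : Arc v w then hw.choose else i₀)
          · intro a _
            exact Finset.mem_univ _
          · intro a ha b hb hab
            have haA : Arc v a := (Finset.mem_filter.mp ha).2
            have hbA : Arc v b := (Finset.mem_filter.mp hb).2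
            simp only [dif_pos haA, dif_pos hbA] at hab
            have h1 := haA.choose_spec.2
            have h2 := hbA.choose_spec.2
            rw [← h1, ← h2, hab]
        simpa using this
    omega
  obtain ⟨c, hc1, hc2⟩ := list_color Arc (fun v => C v) hC Finset.univ L (by
    intro v hv
    have := hdeg v hv
    convert this using 3)
  refine ⟨c, fun v => hc1 v (Finset.mem_univ v), ?_⟩
  intro u v huv
  exact hc2 u (Finset.mem_univ u) v (Finset.mem_univ v) (hcov u v huv)

end OnePlanarPaper
end

section
/- Let G be a multigraph, e = uv a non-loop edge of G, and C' a set of edges of G/e such that in the subgraph formed by C' there is no path between any two vertices that are adjacent in G/e. Then in G, the edge set C = C' ∪ {e} contains no path between any two vertices adjacent in G. -/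
open unitInterval

namespace OnePlanarPaper

/-- Contraction lifting for the no-path condition: let `u, v` be the distinct,
non-adjacent endpoints of the contracted pair `e` in the multigraph `G`, and let
`C'` be a set of edges of `G/e` containing no path between any two vertices
adjacent in `G/e`. Then `C = C' ∪ {e}` (lifted to `G`) contains no path between
any two vertices adjacent in `G`. -/
theorem contraction_no_path_lift {V E : Type*} [DecidableEq V] (G : PlaneMultigraph V E) (u v : V)
    (hne : u ≠ v) (hnadj : ¬ G.Adj u v)
    (C C' : Set (Sym2 V)) (q : V → V) (hq : q = fun w => if w = v then u else w)
    (himg : Set.BijOn (Sym2.map q) C C')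
    (hC' : ∀ a b : V, q a ≠ q b →
        (∃ ε : E, Sym2.map q (G.edgeSym ε) = s(q a, q b)) →
        ¬ (SimpleGraph.fromEdgeSet C').Reachable (q a) (q b)) :
    ∀ a b : V, G.Adj a b →
      ¬ (SimpleGraph.fromEdgeSet (C ∪ {s(u, v)})).Reachable a b := by
  intro a b hab hre
  -- projection of reachability along q
  have key : ∀ x y : V, (SimpleGraph.fromEdgeSet (C ∪ {s(u,v)})).Reachable x y →
      (SimpleGraph.fromEdgeSet C').Reachable (q x) (q y) := by
    intro x y h
    obtain ⟨w⟩ := h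
    induction w with
    | nil => exact SimpleGraph.Reachable.refl _
    | @cons x c y h p ih =>
      refine SimpleGraph.Reachable.trans ?_ ih
      rw [SimpleGraph.fromEdgeSet_adj] at h
      obtain ⟨hmem, hxc⟩ := h
      rcases hmem with hmem | hmem
      · by_cases hqe : q x = q c
        · rw [hqe]
        · refine SimpleGraph.Adj.reachable ?_
          rw [SimpleGraph.fromEdgeSet_adj]
          refine ⟨?_, hqe⟩
          have := himg.mapsTo hmem
          rwa [Sym2.map_pair_eq] at this
      · simp only [Set.mem_singleton_iff, Sym2.eq, Sym2.rel_iff', Prod.mk.injEq,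
          Prod.swap_prod_mk] at hmem
        have : q x = q c := by
          rcases hmem with ⟨hx, hc⟩ | ⟨hx, hc⟩ <;> subst hx <;> subst hc <;>
            simp [hq, hne, hne.symm]
        rw [this]
  -- a ≠ b
  obtain ⟨ε, hε⟩ := hab
  have hab' : a ≠ b := by
    intro hEq
    subst hEq
    have hn := G.no_loops ε
    simp only [PlaneMultigraph.edgeSym, Sym2.eq, Sym2.rel_iff', Prod.mk.injEq,
      Prod.swap_prod_mk] at hε
    rcases hε with ⟨h1, h2⟩ | ⟨h1, h2⟩ <;> exact hn (h1.trans h2.symm)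
  -- q a ≠ q b
  have hqab : q a ≠ q b := by
    intro hEq
    subst hq
    by_cases ha : a = v <;> by_cases hb : b = v <;>
      simp only [ha, hb, if_pos, if_neg, ite_true, ite_false, if_true, if_false] at hEq
    · exact hab' (ha.trans hb.symm)
    · subst ha
      apply hnadj
      exact ⟨ε, by rw [hε]; exact Sym2.eq_swap.trans (by rw [hEq])⟩
    · subst hb
      apply hnadj
      exact ⟨ε, by rw [hε, hEq]⟩
    · exact hab' hEq
  exact hC' a b hqab ⟨ε, by rw [hε, Sym2.map_pair_eq]⟩ (key a b hre)

end OnePlanarPaper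
end
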